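/- Every PAL formula is semantically equivalent (in int-semantics) to an EL_int formula: for all φ ∈ PAL there exists ψ ∈ EL_int with ⊨ φ ↔ ψ. -/

import Mathlib

/-- Formulas of the public announcement language PAL (with the `int` modality). -/
inductive Form : Type
  | atom : ℕ → Form
  | neg : Form → Form
  | and : Form → Form → Form
  | K : Form → Form
  | int : Form → Form
  | ann : Form → Form → Form

/-- Material implication, defined classically. -/
def Form.imp (φ ψ : Form) : Form := .neg (.and φ (.neg ψ))

/-- Int-semantics for PAL on a topological subset model with valuation `v`. -/
def sat {α : Type*} [TopologicalSpace α] (v : ℕ → Set α) : Form → α → Set α → Prop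
  | .atom n, x, _ => x ∈ v n
  | .neg φ, x, U => ¬ sat v φ x U
  | .and φ ψ, x, U => sat v φ x U ∧ sat v ψ x U
  | .K φ, x, U => ∀ y ∈ U, sat v φ y U
  | .int φ, x, U => x ∈ interior {y ∈ U | sat v φ y U}
  | .ann φ ψ, x, U =>
      x ∈ interior {y ∈ U | sat v φ y U} → sat v ψ x (interior {y ∈ U | sat v φ y U})

/-- A PAL formula is announcement-free iff it belongs to the fragment EL_int. -/
def annFree : Form → Prop
  | .atom _ => True
  | .neg φ => annFree φ
  | .and φ ψ => annFree φ ∧ annFree ψ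
  | .K φ => annFree φ
  | .int φ => annFree φ
  | .ann _ _ => False

/-- Syntactic relativization of `χ` by the announcement `θ`. -/
def rel (θ : Form) : Form → Form
  | .atom n => .atom n
  | .neg χ => .neg (rel θ χ)
  | .and χ₁ χ₂ => .and (rel θ χ₁) (rel θ χ₂)
  | .K χ => .K (Form.imp (.int θ) (rel θ χ))
  | .int χ => .int (.and (.int θ) (rel θ χ))
  | .ann _ _ => .atom 0

lemma rel_annFree {θ χ : Form} (hθ : annFree θ) (hχ : annFree χ) :
    annFree (rel θ χ) := by
  induction χ <;> simp_all [rel, annFree, Form.imp]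

lemma sat_imp {α : Type*} [TopologicalSpace α] (v : ℕ → Set α) (φ ψ : Form)
    (x : α) (U : Set α) :
    sat v (Form.imp φ ψ) x U ↔ (sat v φ x U → sat v ψ x U) := by
  simp [Form.imp, sat]

lemma rel_sat {α : Type*} [TopologicalSpace α] (v : ℕ → Set α) (θ : Form)
    (U : Set α) :
    ∀ (χ : Form), annFree χ →
      ∀ x ∈ interior {y ∈ U | sat v θ y U},
        (sat v χ x (interior {y ∈ U | sat v θ y U}) ↔ sat v (rel θ χ) x U) := by
  set I := interior {y ∈ U | sat v θ y U} with hI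
  have hIU : I ⊆ U := interior_subset.trans (Set.sep_subset _ _)
  intro χ
  induction χ with
  | atom n => intro _ x hx; simp [rel, sat]
  | neg χ ih =>
      intro h x hx
      simp only [rel, sat]
      exact not_congr (ih h x hx)
  | and χ₁ χ₂ ih₁ ih₂ =>
      intro h x hx
      simp only [rel, sat]
      exact and_congr (ih₁ h.1 x hx) (ih₂ h.2 x hx)
  | K χ ih =>
      intro h x hx
      simp only [rel, sat, Form.imp, not_and, not_not]
      constructor
      · intro H y _ hyI
        exact (ih h y hyI).mp (H y hyI)
      · intro H y hy
        exact (ih h y hy).mpr (H y (hIU hy) hy)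
  | int χ ih =>
      intro h x hx
      simp only [rel, sat]
      have hset : {y ∈ I | sat v χ y I}
          = {y ∈ U | y ∈ interior {y ∈ U | sat v θ y U} ∧ sat v (rel θ χ) y U} := by
        ext y
        simp only [Set.mem_setOf_eq]
        constructor
        · rintro ⟨hyI, hyχ⟩
          exact ⟨hIU hyI, hyI, (ih h y hyI).mp hyχ⟩
        · rintro ⟨hyU, hyI, hyr⟩
          exact ⟨hyI, (ih h y hyI).mpr hyr⟩
      rw [hset]
  | ann _ _ _ _ =>
      intro h; exact absurd h (by simp [annFree])

/-- Every PAL formula is semantically equivalent, in int-semantics over all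
topological subset models, to an announcement-free (EL_int) formula. -/
theorem pal_reduces_to_el_int.{u} (φ : Form) :
    ∃ ψ : Form, annFree ψ ∧
      ∀ (α : Type u) (_ : TopologicalSpace α) (v : ℕ → Set α) (x : α) (U : Set α),
        x ∈ U → IsOpen U → (sat v φ x U ↔ sat v ψ x U) := by
  induction φ with
  | atom n => exact ⟨.atom n, trivial, fun _ _ _ _ _ _ _ => Iff.rfl⟩
  | neg φ ih =>
      obtain ⟨ψ, hψ, hiff⟩ := ih
      exact ⟨.neg ψ, hψ, fun α _ v x U hx hU => not_congr (hiff α _ v x U hx hU)⟩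
  | and φ₁ φ₂ ih₁ ih₂ =>
      obtain ⟨ψ₁, h₁, hiff₁⟩ := ih₁
      obtain ⟨ψ₂, h₂, hiff₂⟩ := ih₂
      exact ⟨.and ψ₁ ψ₂, ⟨h₁, h₂⟩, fun α _ v x U hx hU =>
        and_congr (hiff₁ α _ v x U hx hU) (hiff₂ α _ v x U hx hU)⟩
  | K φ ih =>
      obtain ⟨ψ, hψ, hiff⟩ := ih
      refine ⟨.K ψ, hψ, fun α _ v x U hx hU => ?_⟩
      simp only [sat]
      exact forall₂_congr fun y hy => hiff α _ v y U hy hU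
  | int φ ih =>
      obtain ⟨ψ, hψ, hiff⟩ := ih
      refine ⟨.int ψ, hψ, fun α _ v x U hx hU => ?_⟩
      have : {y ∈ U | sat v φ y U} = {y ∈ U | sat v ψ y U} := by
        ext y
        simp only [Set.mem_setOf_eq]
        exact and_congr_right fun hy => hiff α _ v y U hy hU
      simp only [sat, this]
  | ann φ₁ φ₂ ih₁ ih₂ =>
      obtain ⟨ψ₁, h₁, hiff₁⟩ := ih₁
      obtain ⟨ψ₂, h₂, hiff₂⟩ := ih₂
      refine ⟨Form.imp (.int ψ₁) (rel ψ₁ ψ₂), ?_, fun α _ v x U hx hU => ?_⟩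
      · simpa [Form.imp, annFree] using ⟨h₁, rel_annFree h₁ h₂⟩
      · have hsets : {y ∈ U | sat v φ₁ y U} = {y ∈ U | sat v ψ₁ y U} := by
          ext y
          simp only [Set.mem_setOf_eq]
          exact and_congr_right fun hy => hiff₁ α _ v y U hy hU
        set I := interior {y ∈ U | sat v ψ₁ y U} with hI
        have hIU : I ⊆ U := interior_subset.trans (Set.sep_subset _ _)
        have lhs : sat v (.ann φ₁ φ₂) x U ↔ (x ∈ I → sat v φ₂ x I) := by
          simp only [sat, hsets]
          exact Iff.rfl
        rw [lhs, sat_imp]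
        have hint : sat v (.int ψ₁) x U ↔ x ∈ I := Iff.rfl
        rw [hint]
        constructor
        · intro H hxI
          exact (rel_sat v ψ₁ U ψ₂ h₂ x hxI).mp
            ((hiff₂ α _ v x I (hxI) isOpen_interior).mp (H hxI))
        · intro H hxI
          exact (hiff₂ α _ v x I hxI isOpen_interior).mpr
            ((rel_sat v ψ₁ U ψ₂ h₂ x hxI).mpr (H hxI))
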